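/- (Ryser's conjecture, proved via the Brègman–Minc inequality.) Let v and k be positive integers with k dividing v, and let J* be the block-diagonal direct sum of v/k copies of the k×k all-ones matrix J_k. Then J* belongs to 𝒜(v,k), per J* = (k!)^{v/k}, and per A ≤ per J* for every A ∈ 𝒜(v,k). -/

import Mathlib

open scoped BigOperators

namespace BGM

/-- The permanent of a square matrix with natural number entries. -/
def perm {n : ℕ} (M : Matrix (Fin n) (Fin n) ℕ) : ℕ :=
  ∑ φ : Equiv.Perm (Fin n), ∏ i, M i (φ i)

/-- `M` is a (0,1)-matrix. -/
def IsZeroOne {n : ℕ} (M : Matrix (Fin n) (Fin n) ℕ) : Prop :=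
  ∀ i j, M i j = 0 ∨ M i j = 1

/-- The number of entries of `M` equal to `0`. -/
def zeroCount {n : ℕ} (M : Matrix (Fin n) (Fin n) ℕ) : ℕ :=
  (Finset.univ.filter fun p : Fin n × Fin n => M p.1 p.2 = 0).card

/-- `𝒰(n, τ)`: the n×n (0,1)-matrices with exactly τ zero entries. -/
def Uclass (n τ : ℕ) : Set (Matrix (Fin n) (Fin n) ℕ) :=
  {M | IsZeroOne M ∧ zeroCount M = τ}

/-- `μ(n, τ) = max {per A : A ∈ 𝒰(n, τ)}`. -/
noncomputable def mu (n τ : ℕ) : ℕ :=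
  sSup (perm '' Uclass n τ)

/-- `𝒜(n, k)`: the n×n (0,1)-matrices with exactly k ones in each row and column. -/
def Aclass (n k : ℕ) : Set (Matrix (Fin n) (Fin n) ℕ) :=
  {M | IsZeroOne M ∧ (∀ i, ∑ j, M i j = k) ∧ (∀ j, ∑ i, M i j = k)}

/-- `P` is a permutation matrix. -/
def IsPermMatrix {n : ℕ} (P : Matrix (Fin n) (Fin n) ℕ) : Prop :=
  ∃ e : Equiv.Perm (Fin n), ∀ i j, P i j = if j = e i then 1 else 0

/-- `A` and `B` are combinatorially equivalent: `B = PAQ` or `B = PAᵀQ` for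
permutation matrices `P`, `Q`. -/
def CombEquiv {n : ℕ} (A B : Matrix (Fin n) (Fin n) ℕ) : Prop :=
  ∃ P Q, IsPermMatrix P ∧ IsPermMatrix Q ∧ (B = P * A * Q ∨ B = P * A.transpose * Q)

/-- Index of the block (of consecutive sizes `L`) containing position `i`. -/
def blockIdx : List ℕ → ℕ → ℕ
  | [], _ => 0
  | s :: L, i => if i < s then 0 else blockIdx L (i - s) + 1

/-- The n×n block-diagonal direct sum of all-ones blocks of sizes `L`
(with `L.sum = n`). -/
def listBlocks (n : ℕ) (L : List ℕ) : Matrix (Fin n) (Fin n) ℕ :=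
  Matrix.of fun i j => if blockIdx L (i : ℕ) = blockIdx L (j : ℕ) then 1 else 0

/-- The n×n block-diagonal matrix with a head block `B` (of size `m`) followed by
all-ones blocks of sizes `L` (with `m + L.sum = n`). -/
def headBlocks (n : ℕ) {m : ℕ} (B : Matrix (Fin m) (Fin m) ℕ) (L : List ℕ) :
    Matrix (Fin n) (Fin n) ℕ :=
  Matrix.of fun i j =>
    if h : (i : ℕ) < m ∧ (j : ℕ) < m then B ⟨(i : ℕ), h.1⟩ ⟨(j : ℕ), h.2⟩
    else if m ≤ (i : ℕ) ∧ m ≤ (j : ℕ) ∧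
        blockIdx L ((i : ℕ) - m) = blockIdx L ((j : ℕ) - m) then 1 else 0

/-- `M` with the `(i0, j0)` entry changed to `1`. -/
def setOne {n : ℕ} (M : Matrix (Fin n) (Fin n) ℕ) (i0 j0 : Fin n) :
    Matrix (Fin n) (Fin n) ℕ :=
  Matrix.of fun i j => if i = i0 ∧ j = j0 then 1 else M i j

/-- `J₃ - I₃`. -/
def J3mI3 : Matrix (Fin 3) (Fin 3) ℕ := Matrix.of fun i j => if i = j then 0 else 1

/-- `J₄ - I₄`. -/
def J4mI4 : Matrix (Fin 4) (Fin 4) ℕ := Matrix.of fun i j => if i = j then 0 else 1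

/-- `A₃`: the 3×3 all-ones matrix except the (1,1) entry is 0. -/
def A3 : Matrix (Fin 3) (Fin 3) ℕ := Matrix.of fun i j => if i = 0 ∧ j = 0 then 0 else 1

/-- `A₃ ⊕ I₂`. -/
def V5 : Matrix (Fin 5) (Fin 5) ℕ :=
  !![0,1,1,0,0; 1,1,1,0,0; 1,1,1,0,0; 0,0,0,1,0; 0,0,0,0,1]

/-- `J₃ ⊕ I₂`. -/
def S5 : Matrix (Fin 5) (Fin 5) ℕ :=
  !![1,1,1,0,0; 1,1,1,0,0; 1,1,1,0,0; 0,0,0,1,0; 0,0,0,0,1]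

/-- The head block of `W`. -/
def BW : Matrix (Fin 4) (Fin 4) ℕ :=
  !![0,0,1,1; 1,1,0,1; 1,1,1,0; 1,1,0,1]

/-- The head block of `X`. -/
def BX : Matrix (Fin 4) (Fin 4) ℕ :=
  !![0,0,1,1; 1,0,1,1; 1,1,0,1; 1,1,1,0]

/-- The head block of `Y`. -/
def BY : Matrix (Fin 4) (Fin 4) ℕ :=
  !![0,0,1,1; 1,0,1,1; 1,1,0,0; 1,1,1,1]

/-- `A₃ ⊕ I₁`. -/
def T4 : Matrix (Fin 4) (Fin 4) ℕ :=
  !![0,1,1,0; 1,1,1,0; 1,1,1,0; 0,0,0,1]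

/-- `A₄ ⊕ J₂`, where `A₄` is `J₄` with the (1,1) entry changed to 0. -/
def Q6 : Matrix (Fin 6) (Fin 6) ℕ :=
  !![0,1,1,1,0,0; 1,1,1,1,0,0; 1,1,1,1,0,0; 1,1,1,1,0,0; 0,0,0,0,1,1; 0,0,0,0,1,1]

/-- `J₃ ⊕ I₁`. -/
def M4 : Matrix (Fin 4) (Fin 4) ℕ :=
  !![1,1,1,0; 1,1,1,0; 1,1,1,0; 0,0,0,1]

open Finset Equiv

variable {n : ℕ}

/-- The set of permutations whose positions are all ones in `A`. -/
def ones {n : ℕ} (A : Matrix (Fin n) (Fin n) ℕ) : Finset (Equiv.Perm (Fin n)) :=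
  Finset.univ.filter fun σ => ∀ l, A l (σ l) = 1

lemma mem_ones {A : Matrix (Fin n) (Fin n) ℕ} {σ : Equiv.Perm (Fin n)} :
    σ ∈ ones A ↔ ∀ l, A l (σ l) = 1 := by simp [ones]

lemma perm_eq_card (A : Matrix (Fin n) (Fin n) ℕ) (hA : IsZeroOne A) :
    perm A = (ones A).card := by
  unfold perm ones
  rw [Finset.card_filter]
  refine Finset.sum_congr rfl fun σ _ => ?_
  by_cases h : ∀ l, A l (σ l) = 1
  · rw [if_pos h]
    exact Finset.prod_eq_one fun l _ => h l
  · rw [if_neg h]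
    push_neg at h
    obtain ⟨l, hl⟩ := h
    exact Finset.prod_eq_zero (Finset.mem_univ l) ((hA l (σ l)).resolve_right hl)

def minor {n : ℕ} (A : Matrix (Fin (n+1)) (Fin (n+1)) ℕ) (i j : Fin (n+1)) :
    Matrix (Fin n) (Fin n) ℕ :=
  A.submatrix i.succAbove j.succAbove

lemma isZeroOne_minor {A : Matrix (Fin (n+1)) (Fin (n+1)) ℕ} (hA : IsZeroOne A)
    (i j : Fin (n+1)) : IsZeroOne (minor A i j) := fun a b => hA _ _

def expandPerm (τ : Equiv.Perm (Fin n)) (i j : Fin (n+1)) : Equiv.Perm (Fin (n+1)) :=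
  (finSuccEquiv' i).trans ((Equiv.optionCongr τ).trans (finSuccEquiv' j).symm)

lemma expandPerm_apply_self (τ : Equiv.Perm (Fin n)) (i j : Fin (n+1)) :
    expandPerm τ i j i = j := by
  simp [expandPerm, finSuccEquiv'_at, finSuccEquiv'_symm_none]

lemma expandPerm_apply_succAbove (τ : Equiv.Perm (Fin n)) (i j : Fin (n+1)) (l : Fin n) :
    expandPerm τ i j (i.succAbove l) = j.succAbove (τ l) := by
  simp [expandPerm, finSuccEquiv'_succAbove, finSuccEquiv'_symm_some]

def shrinkPerm (σ : Equiv.Perm (Fin (n+1))) (i j : Fin (n+1)) : Equiv.Perm (Fin n) :=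
  Equiv.removeNone ((finSuccEquiv' i).symm.trans (σ.trans (finSuccEquiv' j)))

lemma shrinkPerm_spec (σ : Equiv.Perm (Fin (n+1))) (i j : Fin (n+1)) (h : σ i = j)
    (l : Fin n) : j.succAbove (shrinkPerm σ i j l) = σ (i.succAbove l) := by
  have hne : σ (i.succAbove l) ≠ j := by
    rw [← h]
    exact fun hc => (Fin.succAbove_ne i l) (σ.injective hc)
  obtain ⟨m, hm⟩ := Fin.exists_succAbove_eq hne
  have key : ((finSuccEquiv' i).symm.trans (σ.trans (finSuccEquiv' j))) (some l) = some m := by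
    simp only [Equiv.trans_apply, finSuccEquiv'_symm_some, ← hm, finSuccEquiv'_succAbove]
  have h2 := Equiv.removeNone_some _ ⟨m, key⟩
  rw [key] at h2
  rw [shrinkPerm, Option.some_inj.mp h2, hm]

lemma card_fiber_eq (A : Matrix (Fin (n+1)) (Fin (n+1)) ℕ) (hA : IsZeroOne A)
    (i j : Fin (n+1)) (h1 : A i j = 1) :
    ((ones A).filter fun σ => σ i = j).card = perm (minor A i j) := by
  rw [perm_eq_card _ (isZeroOne_minor hA i j)]
  apply Finset.card_bij (fun σ _ => shrinkPerm σ i j)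
  · intro σ hσ
    rw [Finset.mem_filter] at hσ
    obtain ⟨hones, hij⟩ := hσ
    rw [mem_ones] at hones ⊢
    intro l
    show A (i.succAbove l) (j.succAbove (shrinkPerm σ i j l)) = 1
    rw [shrinkPerm_spec σ i j hij l]
    exact hones _
  · intro σ1 h1' σ2 h2' heq
    rw [Finset.mem_filter] at h1' h2'
    apply Equiv.ext; intro x
    rcases eq_or_ne x i with rfl | hx
    · rw [h1'.2, h2'.2]
    · obtain ⟨l, rfl⟩ := Fin.exists_succAbove_eq hx
      rw [← shrinkPerm_spec σ1 i j h1'.2 l, ← shrinkPerm_spec σ2 i j h2'.2 l, heq]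
  · intro τ hτ
    rw [mem_ones] at hτ
    have hself := expandPerm_apply_self τ i j
    refine ⟨expandPerm τ i j, ?_, ?_⟩
    · rw [Finset.mem_filter, mem_ones]
      refine ⟨?_, hself⟩
      intro l'
      rcases eq_or_ne l' i with rfl | hx
      · rw [hself]; exact h1
      · obtain ⟨l, rfl⟩ := Fin.exists_succAbove_eq hx
        rw [expandPerm_apply_succAbove]
        exact hτ l
    · apply Equiv.ext; intro l
      have h5 := shrinkPerm_spec (expandPerm τ i j) i j hself l
      rw [expandPerm_apply_succAbove] at h5
      exact Fin.succAbove_right_injective h5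

lemma perm_expand (A : Matrix (Fin (n+1)) (Fin (n+1)) ℕ) (hA : IsZeroOne A) (i : Fin (n+1)) :
    perm A = ∑ j, A i j * perm (minor A i j) := by
  rw [perm_eq_card A hA,
    Finset.card_eq_sum_card_fiberwise (f := fun σ => σ i) (t := Finset.univ)
      (fun σ _ => Finset.mem_univ (σ i))]
  refine Finset.sum_congr rfl fun j _ => ?_
  rcases hA i j with h0 | h1
  · rw [h0, zero_mul, Finset.card_eq_zero, Finset.filter_eq_empty_iff]
    intro σ hσ
    rw [mem_ones] at hσ
    intro hc
    have hx := hσ i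
    rw [hc, h0] at hx
    exact absurd hx (by omega)
  · rw [h1, one_mul, ← card_fiber_eq A hA i j h1]


open Real


lemma rpow_self_eq_exp {x : ℝ} (hx : 0 ≤ x) : x ^ x = Real.exp (x * Real.log x) := by
  rcases hx.eq_or_lt with rfl | h
  · simp
  · rw [Real.rpow_def_of_pos h, mul_comm]

lemma xlogx_amgm {ι : Type*} (s : Finset ι) (hs : s.Nonempty) (t : ι → ℝ)
    (ht : ∀ x ∈ s, 0 ≤ t x) :
    ((∑ x ∈ s, t x) / s.card) ^ (∑ x ∈ s, t x) ≤ ∏ x ∈ s, (t x) ^ (t x) := by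
  have hc : (0:ℝ) < s.card := by exact_mod_cast hs.card_pos
  set T := ∑ x ∈ s, t x with hT
  have hT0 : 0 ≤ T := Finset.sum_nonneg ht
  have hRHS : ∏ x ∈ s, (t x) ^ (t x) = Real.exp (∑ x ∈ s, t x * Real.log (t x)) := by
    rw [Real.exp_sum]
    exact Finset.prod_congr rfl fun x hx => rpow_self_eq_exp (ht x hx)
  rcases hT0.eq_or_lt with h0 | hTpos
  · have hz : ∀ x ∈ s, t x = 0 :=
      (Finset.sum_eq_zero_iff_of_nonneg ht).mp h0.symm
    rw [hRHS, ← h0, zero_div, Real.rpow_zero]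
    rw [Finset.sum_congr rfl fun x hx => by rw [hz x hx]]
    simp
  · have hdiv : (0:ℝ) < T / s.card := div_pos hTpos hc
    rw [hRHS, Real.rpow_def_of_pos hdiv, Real.exp_le_exp]
    have hconv := Real.convexOn_mul_log.map_centerMass_le (t := s) (w := fun _ => 1)
      (p := t) (fun i _ => zero_le_one) (by simpa using hc) (fun i hi => ht i hi)
    simp only [Finset.centerMass] at hconv
    simp only [smul_eq_mul, one_mul, Finset.sum_const, nsmul_eq_mul, mul_one,
      Function.comp] at hconv
    have hc0 : (s.card:ℝ) ≠ 0 := ne_of_gt hc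
    have h2 := mul_le_mul_of_nonneg_right hconv hc.le
    rw [div_eq_inv_mul]
    calc Real.log ((s.card:ℝ)⁻¹ * T) * T
        = ((s.card:ℝ)⁻¹ * T) * Real.log ((s.card:ℝ)⁻¹ * T) * s.card := by
          field_simp
      _ ≤ ((s.card:ℝ)⁻¹ * ∑ x ∈ s, ((fun x => x * Real.log x) ∘ t) x) * s.card := h2
      _ = ∑ x ∈ s, t x * Real.log (t x) := by
          field_simp
          rfl


open Finset in
/-- `F t = (t!)^(1/t)`. -/
noncomputable def F (t : ℕ) : ℝ := (t.factorial : ℝ) ^ ((t : ℝ)⁻¹)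

lemma F_pos (t : ℕ) : 0 < F t :=
  Real.rpow_pos_of_pos (by exact_mod_cast t.factorial_pos) _

lemma F_pow_self (t : ℕ) : F t ^ t = (t.factorial : ℝ) := by
  rcases Nat.eq_zero_or_pos t with rfl | ht
  · simp [Nat.factorial]
  · have h0 : ((t:ℝ)) ≠ 0 := by positivity
    rw [F, ← Real.rpow_natCast ((t.factorial:ℝ) ^ ((t:ℝ)⁻¹)) t, ← Real.rpow_mul
      (by positivity), inv_mul_cancel₀ h0, Real.rpow_one]

open Finset in
lemma prod_succAbove {n : ℕ} (g : Fin (n+1) → ℝ) (i : Fin (n+1)) :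
    ∏ l : Fin n, g (i.succAbove l) = ∏ j ∈ Finset.univ.erase i, g j := by
  apply Finset.prod_nbij (fun l => i.succAbove l)
  · intro l _
    exact Finset.mem_erase.mpr ⟨Fin.succAbove_ne i l, Finset.mem_univ _⟩
  · intro a _ b _ hab
    exact Fin.succAbove_right_injective hab
  · intro j hj
    obtain ⟨l, hl⟩ := Fin.exists_succAbove_eq (Finset.mem_erase.mp hj).1
    exact ⟨l, Finset.mem_coe.mpr (Finset.mem_univ l), hl⟩
  · intro l _
    rfl

open Finset in
theorem bregman : ∀ {n : ℕ} (A : Matrix (Fin n) (Fin n) ℕ), IsZeroOne A →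
    (perm A : ℝ) ≤ ∏ j, F (∑ c, A j c) := by
  intro n
  induction n with
  | zero =>
    intro A _
    have h1 : perm A = 1 := by simp [perm]
    rw [h1]
    simp
  | succ n IH =>
    intro A hA
    set r : Fin (n+1) → ℕ := fun j => ∑ c, A j c with hr
    set p : ℕ := perm A with hp
    clear_value r p
    rcases Nat.eq_zero_or_pos p with hp0 | hppos
    · rw [hp0]
      push_cast
      exact Finset.prod_nonneg fun j _ => (F_pos _).le
    -- basic facts
    have hcard : (ones A).card = p := by rw [hp]; exact (perm_eq_card A hA).symm
    obtain ⟨σ₀, hσ₀⟩ : (ones A).Nonempty := by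
      rw [← Finset.card_pos, hcard]; exact hppos
    have hones1 : ∀ σ ∈ ones A, ∀ l, A l (σ l) = 1 := fun σ hσ => mem_ones.mp hσ
    have hr1 : ∀ j, 1 ≤ r j := by
      intro j
      have h := hones1 σ₀ hσ₀ j
      simp only [hr]
      calc 1 = A j (σ₀ j) := h.symm
        _ ≤ ∑ c, A j c := Finset.single_le_sum (fun c _ => Nat.zero_le _) (Finset.mem_univ _)
    have hrn : ∀ j, r j ≤ n + 1 := by
      intro j
      simp only [hr]
      calc ∑ c, A j c ≤ ∑ _c : Fin (n+1), 1 :=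
            Finset.sum_le_sum fun c _ => by rcases hA j c with h | h <;> omega
        _ = n + 1 := by simp
    have hcolcard : ∀ i, (Finset.univ.filter fun j => A i j = 1).card = r i := by
      intro i
      simp only [hr]
      rw [Finset.card_filter]
      exact (Finset.sum_congr rfl fun j _ => by rcases hA i j with h | h <;> simp [h]).symm
    -- the key per-row inequality
    have key : ∀ i, (p:ℝ) ^ p ≤ (r i : ℝ) ^ p *
        ∏ σ ∈ ones A, (perm (minor A i (σ i)) : ℝ) := by
      intro i
      set cs : Finset (Fin (n+1)) := Finset.univ.filter fun j => A i j = 1 with hcs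
      have hcsne : cs.Nonempty := by
        rw [← Finset.card_pos, hcolcard i]
        exact lt_of_lt_of_le Nat.one_pos (hr1 i)
      have hsum : ∑ j ∈ cs, perm (minor A i j) = p := by
        rw [hp, perm_expand A hA i]
        rw [← Finset.sum_filter_of_ne (p := fun j => A i j = 1)
          (f := fun j => A i j * perm (minor A i j))]
        · exact Finset.sum_congr rfl fun j hj => by
            rw [(Finset.mem_filter.mp hj).2, one_mul]
        · intro j _ hne
          rcases hA i j with h | h
          · rw [h, zero_mul] at hne; exact absurd rfl hne
          · exact h
      have hx := xlogx_amgm cs hcsne (fun j => (perm (minor A i j) : ℝ))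
        (fun j _ => Nat.cast_nonneg _)
      rw [show ∑ j ∈ cs, ((perm (minor A i j) : ℕ) : ℝ) = (p : ℝ) by
            rw [← hsum]; push_cast; rfl,
          hcolcard i] at hx
      -- convert rpow exponents to ℕ pow
      have hfib : ∀ j, ¬ (A i j = 1) → ((ones A).filter fun σ => σ i = j).card = 0 := by
        intro j hj
        rw [Finset.card_eq_zero, Finset.filter_eq_empty_iff]
        intro σ hσ hc
        have hx1 := hones1 σ hσ i
        rw [hc] at hx1
        exact hj hx1
      have hprod : ∏ σ ∈ ones A, (perm (minor A i (σ i)) : ℝ)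
          = ∏ j ∈ cs, (perm (minor A i j) : ℝ) ^ (perm (minor A i j)) := by
        rw [← Finset.prod_fiberwise_of_maps_to (s := ones A)
          (g := fun σ : Equiv.Perm (Fin (n+1)) => σ i) (t := Finset.univ)
          (fun σ _ => Finset.mem_univ _)
          (fun σ : Equiv.Perm (Fin (n+1)) => (perm (minor A i (σ i)) : ℝ))]
        rw [← Finset.prod_subset (Finset.subset_univ cs) (f := fun j =>
          ∏ σ ∈ (ones A).filter fun σ => σ i = j, (perm (minor A i (σ i)) : ℝ))]
        · apply Finset.prod_congr rfl
          intro j hj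
          have hj1 := (Finset.mem_filter.mp hj).2
          calc ∏ σ ∈ (ones A).filter fun σ => σ i = j, (perm (minor A i (σ i)) : ℝ)
              = ∏ _σ ∈ (ones A).filter fun σ => σ i = j, (perm (minor A i j) : ℝ) := by
                refine Finset.prod_congr rfl fun σ hσ => ?_
                rw [(Finset.mem_filter.mp hσ).2]
            _ = (perm (minor A i j) : ℝ) ^ (((ones A).filter fun σ => σ i = j).card) :=
                Finset.prod_const _
            _ = (perm (minor A i j) : ℝ) ^ (perm (minor A i j)) := by
                rw [card_fiber_eq A hA i j hj1]
        · intro j _ hj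
          rw [Finset.filter_eq_empty_iff.mpr, Finset.prod_empty]
          intro σ hσ hc
          have hx1 := hones1 σ hσ i
          rw [hc] at hx1
          exact hj (Finset.mem_filter.mpr ⟨Finset.mem_univ _, hx1⟩)
      -- put together
      have hri : (0:ℝ) < (r i : ℝ) := by exact_mod_cast lt_of_lt_of_le Nat.one_pos (hr1 i)
      rw [hprod]
      have hx2 : ((p:ℝ) / (r i)) ^ ((p:ℕ):ℝ) ≤
          ∏ j ∈ cs, (perm (minor A i j) : ℝ) ^ (perm (minor A i j)) := by
        refine le_trans (le_of_eq rfl) (le_trans hx ?_)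
        refine le_of_eq (Finset.prod_congr rfl fun j _ => ?_)
        rw [Real.rpow_natCast]
      rw [Real.rpow_natCast] at hx2
      calc (p:ℝ) ^ p = ((p:ℝ) / (r i)) ^ p * ((r i : ℝ)) ^ p := by
            rw [← mul_pow, div_mul_cancel₀ _ (ne_of_gt hri)]
        _ ≤ (∏ j ∈ cs, (perm (minor A i j) : ℝ) ^ (perm (minor A i j))) * ((r i : ℝ)) ^ p := by
            refine mul_le_mul_of_nonneg_right hx2 (by positivity)
        _ = (r i : ℝ) ^ p * ∏ j ∈ cs, (perm (minor A i j) : ℝ) ^ (perm (minor A i j)) :=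
            mul_comm _ _
    -- minor row sums
    have hminrow : ∀ (i jj : Fin (n+1)) (l : Fin n),
        ∑ c, minor A i jj l c = r (i.succAbove l) - A (i.succAbove l) jj := by
      intro i jj l
      have hadd : r (i.succAbove l) =
          A (i.succAbove l) jj + ∑ c : Fin n, A (i.succAbove l) (jj.succAbove c) := by
        rw [hr]
        exact Fin.sum_univ_succAbove (fun c => A (i.succAbove l) c) jj
      have h2 : ∑ c, minor A i jj l c = ∑ c : Fin n, A (i.succAbove l) (jj.succAbove c) := rfl
      omega
    -- induction hypothesis, reindexed
    have hIH : ∀ σ ∈ ones A, ∀ i : Fin (n+1),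
        (perm (minor A i (σ i)) : ℝ) ≤ ∏ j ∈ Finset.univ.erase i, F (r j - A j (σ i)) := by
      intro σ hσ i
      refine le_trans (IH (minor A i (σ i)) (isZeroOne_minor hA _ _)) ?_
      rw [← prod_succAbove (fun j => F (r j - A j (σ i))) i]
      exact le_of_eq (Finset.prod_congr rfl fun l _ => by rw [hminrow i (σ i) l])
    -- counting per column
    have hcount : ∀ σ ∈ ones A, ∀ j : Fin (n+1),
        ∏ i ∈ Finset.univ.erase j, F (r j - A j (σ i)) =
          F (r j - 1) ^ (r j - 1) * F (r j) ^ (n + 1 - r j) := by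
      intro σ hσ j
      have h1 : ∏ i ∈ Finset.univ.erase j, F (r j - A j (σ i))
          = ∏ c ∈ Finset.univ.erase (σ j), F (r j - A j c) := by
        apply Finset.prod_nbij (fun i => σ i)
        · intro i hi
          exact Finset.mem_erase.mpr
            ⟨fun hc => (Finset.mem_erase.mp hi).1 (σ.injective hc), Finset.mem_univ _⟩
        · intro a _ b _ h
          exact σ.injective h
        · intro c hc
          refine ⟨σ.symm c, Finset.mem_coe.mpr (Finset.mem_erase.mpr ⟨?_, Finset.mem_univ _⟩),
            σ.apply_symm_apply c⟩
          intro hcc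
          exact (Finset.mem_erase.mp hc).1 (by rw [← σ.apply_symm_apply c, hcc])
        · intros; rfl
      have hcard1 : ((Finset.univ.erase (σ j)).filter fun c => A j c = 1).card = r j - 1 := by
        rw [Finset.filter_erase (σ j) Finset.univ (p := fun c => A j c = 1)]
        rw [Finset.card_erase_of_mem
          (Finset.mem_filter.mpr ⟨Finset.mem_univ _, hones1 σ hσ j⟩ :
            σ j ∈ Finset.univ.filter fun c => A j c = 1)]
        rw [hcolcard j]
      have hcard2 : ((Finset.univ.erase (σ j)).filter fun c => ¬ (A j c = 1)).card
          = n + 1 - r j := by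
        have htot := Finset.card_filter_add_card_filter_not
          (s := Finset.univ.erase (σ j)) (p := fun c => A j c = 1)
        rw [Finset.card_erase_of_mem (Finset.mem_univ _)] at htot
        rw [Finset.card_univ, Fintype.card_fin] at htot
        have hj1 := hr1 j
        have hjn := hrn j
        omega
      rw [h1, ← Finset.prod_filter_mul_prod_filter_not (Finset.univ.erase (σ j))
        (fun c => A j c = 1)]
      congr 1
      · calc ∏ c ∈ (Finset.univ.erase (σ j)).filter fun c => A j c = 1, F (r j - A j c)
            = ∏ _c ∈ (Finset.univ.erase (σ j)).filter fun c => A j c = 1, F (r j - 1) :=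
              Finset.prod_congr rfl fun c hc => by rw [(Finset.mem_filter.mp hc).2]
          _ = F (r j - 1) ^ (r j - 1) := by rw [Finset.prod_const, hcard1]
      · calc ∏ c ∈ (Finset.univ.erase (σ j)).filter fun c => ¬ (A j c = 1), F (r j - A j c)
            = ∏ _c ∈ (Finset.univ.erase (σ j)).filter fun c => ¬ (A j c = 1), F (r j) := by
              refine Finset.prod_congr rfl fun c hc => ?_
              have h0 : A j c = 0 := (hA j c).resolve_right (Finset.mem_filter.mp hc).2
              rw [h0, Nat.sub_zero]
          _ = F (r j) ^ (n + 1 - r j) := by rw [Finset.prod_const, hcard2]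
    -- the global chain
    have hchain : ((p:ℝ)) ^ ((n+1) * p) ≤ (∏ j, F (r j)) ^ ((n+1) * p) := by
      have step1 : ((p:ℝ)) ^ ((n+1) * p) = ∏ _i : Fin (n+1), (p:ℝ)^p := by
        rw [Finset.prod_const, Finset.card_univ, Fintype.card_fin, ← pow_mul, Nat.mul_comm]
      rw [step1]
      have halg : ∀ j : Fin (n+1), (r j : ℝ)^p *
          (F (r j - 1) ^ (r j - 1) * F (r j) ^ (n + 1 - r j)) ^ p = F (r j) ^ ((n+1) * p) := by
        intro j
        rw [← mul_pow]
        have h1 : (r j : ℝ) * (F (r j - 1) ^ (r j - 1) * F (r j) ^ (n + 1 - r j))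
            = F (r j) ^ (n+1) := by
          rw [F_pow_self (r j - 1), ← mul_assoc]
          have h2 : (r j : ℝ) * ((r j - 1).factorial : ℝ) = ((r j).factorial : ℝ) := by
            rw [← Nat.cast_mul, Nat.mul_factorial_pred (Nat.one_le_iff_ne_zero.mp (hr1 j))]
          rw [h2, ← F_pow_self (r j), ← pow_add]
          congr 1
          have := hr1 j; have := hrn j; omega
        rw [h1, ← pow_mul]
      calc ∏ _i : Fin (n+1), (p:ℝ)^p
          ≤ ∏ i, ((r i : ℝ) ^ p * ∏ σ ∈ ones A, (perm (minor A i (σ i)) : ℝ)) :=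
            Finset.prod_le_prod (fun i _ => by positivity) (fun i _ => key i)
        _ = (∏ i, (r i : ℝ) ^ p) * ∏ i, ∏ σ ∈ ones A, (perm (minor A i (σ i)) : ℝ) :=
            Finset.prod_mul_distrib
        _ = (∏ i, (r i : ℝ) ^ p) * ∏ σ ∈ ones A, ∏ i, (perm (minor A i (σ i)) : ℝ) := by
            rw [Finset.prod_comm]
        _ ≤ (∏ i, (r i : ℝ) ^ p) * ∏ σ ∈ ones A,
              ∏ j, (F (r j - 1) ^ (r j - 1) * F (r j) ^ (n + 1 - r j)) := by
            refine mul_le_mul_of_nonneg_left ?_ (by positivity)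
            refine Finset.prod_le_prod
              (fun σ _ => Finset.prod_nonneg fun i _ => Nat.cast_nonneg _) ?_
            intro σ hσ
            calc ∏ i, (perm (minor A i (σ i)) : ℝ)
                ≤ ∏ i, ∏ j ∈ Finset.univ.erase i, F (r j - A j (σ i)) :=
                  Finset.prod_le_prod (fun i _ => Nat.cast_nonneg _) (fun i _ => hIH σ hσ i)
              _ = ∏ j, ∏ i ∈ Finset.univ.erase j, F (r j - A j (σ i)) := by
                  refine Finset.prod_comm' ?_
                  intro x y
                  simp only [Finset.mem_erase, Finset.mem_univ, and_true, true_and]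
                  exact ne_comm
              _ = ∏ j, (F (r j - 1) ^ (r j - 1) * F (r j) ^ (n + 1 - r j)) :=
                  Finset.prod_congr rfl fun j _ => hcount σ hσ j
        _ = (∏ i, (r i : ℝ) ^ p) *
              (∏ j, (F (r j - 1) ^ (r j - 1) * F (r j) ^ (n + 1 - r j))) ^ p := by
            rw [Finset.prod_const, hcard]
        _ = ∏ j, ((r j : ℝ)^p *
              (F (r j - 1) ^ (r j - 1) * F (r j) ^ (n + 1 - r j)) ^ p) := by
            rw [← Finset.prod_pow, ← Finset.prod_mul_distrib]
        _ = ∏ j, F (r j) ^ ((n+1) * p) := Finset.prod_congr rfl fun j _ => halg j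
        _ = (∏ j, F (r j)) ^ ((n+1) * p) := Finset.prod_pow _ _ _
    have hne : (n+1) * p ≠ 0 := by positivity
    have hfinal := (pow_le_pow_iff_left₀ (Nat.cast_nonneg p)
      (Finset.prod_nonneg fun j _ => (F_pos _).le) hne).mp hchain
    simpa only [hp, hr] using hfinal


theorem bregman_regular {v k : ℕ} (hk : 0 < k) (hdvd : k ∣ v)
    (A : Matrix (Fin v) (Fin v) ℕ) (hzo : IsZeroOne A) (hrow : ∀ i, ∑ j, A i j = k) :
    perm A ≤ k.factorial ^ (v / k) := by
  have hb := bregman A hzo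
  rw [Finset.prod_congr rfl (fun j _ => by rw [hrow j])] at hb
  rw [Finset.prod_const, Finset.card_univ, Fintype.card_fin] at hb
  have hv : k * (v / k) = v := Nat.mul_div_cancel' hdvd
  have hF : F k ^ v = ((k.factorial : ℝ) ^ (v / k)) := by
    conv_lhs => rw [← hv]
    rw [pow_mul, F_pow_self]
  rw [hF] at hb
  exact_mod_cast hb

section ListBlocks

lemma blockIdx_replicate {k : ℕ} (hk : 0 < k) :
    ∀ (m i : ℕ), i < m * k → blockIdx (List.replicate m k) i = i / k := by
  intro m
  induction m with
  | zero => intro i hi; omega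
  | succ m ih =>
    intro i hi
    rw [List.replicate_succ]
    show (if i < k then 0 else blockIdx (List.replicate m k) (i - k) + 1) = i / k
    split_ifs with h
    · exact (Nat.div_eq_of_lt h).symm
    · push_neg at h
      have hsm : (m + 1) * k = m * k + k := Nat.succ_mul m k
      rw [ih (i - k) (by omega)]
      have h2 : (i - k) + k = i := Nat.sub_add_cancel h
      calc (i - k) / k + 1 = ((i - k) + k) / k := (Nat.add_div_right _ hk).symm
        _ = i / k := by rw [h2]

lemma listBlocks_replicate_apply {v k m : ℕ} (hk : 0 < k) (hv : m * k = v) (i j : Fin v) :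
    listBlocks v (List.replicate m k) i j = if (i:ℕ)/k = (j:ℕ)/k then 1 else 0 := by
  show (if blockIdx (List.replicate m k) (i:ℕ) = blockIdx (List.replicate m k) (j:ℕ)
      then 1 else 0) = _
  rw [blockIdx_replicate hk m i (by omega), blockIdx_replicate hk m j (by omega)]

end ListBlocks
section Blocks

variable {v k m : ℕ}

/-- Index equivalence `Fin m × Fin k ≃ Fin v` when `m * k = v`. -/
def eqv (hv : m * k = v) : Fin m × Fin k ≃ Fin v :=
  finProdFinEquiv.trans (finCongr hv)

lemma eqv_val (hv : m * k = v) (a : Fin m) (b : Fin k) :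
    ((eqv hv (a, b)) : ℕ) = (b : ℕ) + k * (a : ℕ) := by
  simp [eqv]

lemma eqv_div (hk : 0 < k) (hv : m * k = v) (a : Fin m) (b : Fin k) :
    ((eqv hv (a, b)) : ℕ) / k = (a : ℕ) := by
  rw [eqv_val, Nat.add_mul_div_left _ _ hk, Nat.div_eq_of_lt b.isLt, zero_add]

lemma listBlocks_rowsum (hk : 0 < k) (hv : m * k = v) (i : Fin v) :
    ∑ j, listBlocks v (List.replicate m k) i j = k := by
  have hlt : (i:ℕ)/k < m := by
    have h := i.isLt
    have h2 : (i:ℕ) < m * k := by omega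
    exact (Nat.div_lt_iff_lt_mul hk).mpr h2
  set a0 : Fin m := ⟨(i:ℕ)/k, hlt⟩ with ha0
  rw [Finset.sum_congr rfl fun j _ => listBlocks_replicate_apply hk hv i j]
  rw [← Equiv.sum_comp (eqv hv) (fun j : Fin v => if (i:ℕ)/k = (j:ℕ)/k then (1:ℕ) else 0)]
  rw [Fintype.sum_prod_type]
  have hterm : ∀ (a : Fin m) (b : Fin k),
      (if (i:ℕ)/k = ((eqv hv (a,b)):ℕ)/k then (1:ℕ) else 0) = if a0 = a then 1 else 0 := by
    intro a b
    rw [eqv_div hk hv]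
    exact if_congr (by rw [Fin.ext_iff]) rfl rfl
  rw [Finset.sum_congr rfl fun a _ => Finset.sum_congr rfl fun b _ => hterm a b]
  have h2 : ∀ a : Fin m, ∑ _b : Fin k, (if a0 = a then (1:ℕ) else 0) = if a0 = a then k else 0 :=
    fun a => by split_ifs <;> simp
  rw [Finset.sum_congr rfl fun a _ => h2 a]
  rw [Finset.sum_ite_eq]
  simp

lemma perm_listBlocks (hk : 0 < k) (hv : m * k = v) :
    perm (listBlocks v (List.replicate m k)) = k.factorial ^ m := by
  set M := listBlocks v (List.replicate m k) with hM
  have happ : ∀ i j : Fin v, M i j = if (i:ℕ)/k = (j:ℕ)/k then 1 else 0 :=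
    listBlocks_replicate_apply hk hv
  have hzo : IsZeroOne M := fun i j => by rw [happ]; split_ifs <;> simp
  rw [perm_eq_card M hzo]
  have hmem : ∀ σ : Equiv.Perm (Fin v),
      σ ∈ ones M ↔ ∀ l : Fin v, ((σ l : ℕ))/k = (l:ℕ)/k := by
    intro σ
    rw [mem_ones]
    refine forall_congr' fun l => ?_
    rw [happ]
    split_ifs with h
    · exact ⟨fun _ => h.symm, fun _ => rfl⟩
    · exact ⟨fun h1 => absurd h1 (by decide), fun h1 => absurd h1.symm h⟩
  have hcardfun : (Finset.univ : Finset (Fin m → Equiv.Perm (Fin k))).card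
      = k.factorial ^ m := by
    rw [Finset.card_univ, Fintype.card_fun, Fintype.card_perm, Fintype.card_fin,
      Fintype.card_fin]
  rw [← hcardfun]
  symm
  apply Finset.card_bij (fun (g : Fin m → Equiv.Perm (Fin k)) _ =>
    (eqv hv).permCongr (Equiv.prodCongrRight g))
  · intro g _
    rw [hmem]
    intro l
    obtain ⟨⟨a, b⟩, rfl⟩ : ∃ x, eqv hv x = l := ⟨(eqv hv).symm l, (eqv hv).apply_symm_apply l⟩
    rw [Equiv.permCongr_apply, Equiv.symm_apply_apply, Equiv.prodCongrRight_apply]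
    rw [eqv_div hk hv, eqv_div hk hv]
  · intro g1 _ g2 _ heq
    funext a
    apply Equiv.ext
    intro b
    have h1 := congrArg (fun σ : Equiv.Perm (Fin v) => σ (eqv hv (a, b))) heq
    simp only [Equiv.permCongr_apply, Equiv.symm_apply_apply,
      Equiv.prodCongrRight_apply] at h1
    have h2 := (eqv hv).injective h1
    exact (Prod.mk.injEq _ _ _ _ ▸ h2 : (a, g1 a b) = (a, g2 a b)) |> fun h => congrArg Prod.snd h
  · intro σ hσ
    rw [hmem] at hσ
    have hinj : ∀ a : Fin m, Function.Injective
        (fun b : Fin k => (⟨(σ (eqv hv (a,b)) : ℕ) % k, Nat.mod_lt _ hk⟩ : Fin k)) := by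
      intro a b1 b2 h12
      simp only [Fin.mk.injEq] at h12
      have hd1 := hσ (eqv hv (a, b1))
      have hd2 := hσ (eqv hv (a, b2))
      rw [eqv_div hk hv] at hd1 hd2
      have e1 := Nat.div_add_mod (σ (eqv hv (a,b1)) : ℕ) k
      have e2 := Nat.div_add_mod (σ (eqv hv (a,b2)) : ℕ) k
      rw [hd1] at e1
      rw [hd2] at e2
      have hveq : ((σ (eqv hv (a,b1)) : ℕ)) = ((σ (eqv hv (a,b2)) : ℕ)) := by omega
      have h3 := σ.injective (Fin.ext hveq)
      have h4 := (eqv hv).injective h3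
      exact congrArg Prod.snd h4
    refine ⟨fun a => Equiv.ofBijective _ (Finite.injective_iff_bijective.mp (hinj a)),
      Finset.mem_univ _, ?_⟩
    apply Equiv.ext
    intro l
    obtain ⟨⟨a, b⟩, rfl⟩ : ∃ x, eqv hv x = l := ⟨(eqv hv).symm l, (eqv hv).apply_symm_apply l⟩
    rw [Equiv.permCongr_apply, Equiv.symm_apply_apply, Equiv.prodCongrRight_apply]
    apply Fin.ext
    rw [eqv_val]
    have hofb : (Equiv.ofBijective _ (Finite.injective_iff_bijective.mp (hinj a)) b : Fin k)
        = (⟨(σ (eqv hv (a,b)) : ℕ) % k, Nat.mod_lt _ hk⟩ : Fin k) := rfl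
    rw [hofb]
    have hd := hσ (eqv hv (a,b))
    rw [eqv_div hk hv] at hd
    have e1 := Nat.div_add_mod (σ (eqv hv (a,b)) : ℕ) k
    rw [hd] at e1
    dsimp only
    omega

end Blocks

theorem stmt15 (v k : ℕ) (hv : 0 < v) (hk : 0 < k) (hdvd : k ∣ v) :
    listBlocks v (List.replicate (v / k) k) ∈ Aclass v k ∧
    perm (listBlocks v (List.replicate (v / k) k)) = k.factorial ^ (v / k) ∧
    ∀ A ∈ Aclass v k, perm A ≤ perm (listBlocks v (List.replicate (v / k) k)) := by
  have hm : (v / k) * k = v := Nat.div_mul_cancel hdvd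
  have happ := listBlocks_replicate_apply (m := v / k) hk hm
  have hzo : IsZeroOne (listBlocks v (List.replicate (v / k) k)) := fun i j => by
    rw [happ]; split_ifs <;> simp
  have hrow : ∀ i, ∑ j, listBlocks v (List.replicate (v / k) k) i j = k :=
    listBlocks_rowsum hk hm
  have hsymm : ∀ i j, listBlocks v (List.replicate (v / k) k) i j
      = listBlocks v (List.replicate (v / k) k) j i := fun i j => by
    rw [happ, happ]; exact if_congr eq_comm rfl rfl
  have hcol : ∀ j, ∑ i, listBlocks v (List.replicate (v / k) k) i j = k := fun j => by
    rw [Finset.sum_congr rfl fun i _ => hsymm i j]; exact hrow j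
  refine ⟨⟨hzo, hrow, hcol⟩, perm_listBlocks hk hm, ?_⟩
  intro A hA
  rw [perm_listBlocks hk hm]
  exact bregman_regular hk hdvd A hA.1 hA.2.1


end BGM
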